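/- For the binary entropy function $H_b$, the bounds $4p(1-p) \leq H_b(p) \leq (4p(1-p))^{1/\ln 4}$ hold for all $p \in (0,1)$. -/

import Mathlib

open Real

/-- The binary entropy function (in bits). -/
noncomputable def Hb (p : ℝ) : ℝ :=
  -(p * Real.logb 2 p) - (1 - p) * Real.logb 2 (1 - p)

section BinaryEntropyBoundsAux

open Filter Topology


/-- `EE x = ((1-x)log(1-x) + (1+x)log(1+x))/2`, written via `negMulLog` for continuity. -/
noncomputable def EE (x : ℝ) : ℝ := -(Real.negMulLog (1-x) + Real.negMulLog (1+x))/2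

lemma EE_def' (x : ℝ) : EE x = ((1-x)*Real.log (1-x) + (1+x)*Real.log (1+x))/2 := by
  simp only [EE, Real.negMulLog]; ring

lemma entropy_hasSum {x : ℝ} (hx : |x| < 1) :
    HasSum (fun m : ℕ => x^(2*m+2)/((2*(m:ℝ)+1)*(2*(m:ℝ)+2))) (EE x) := by
  have hx1 : (0:ℝ) < 1 - x := by have := abs_lt.1 hx; linarith [this.2]
  have hx1' : (0:ℝ) < 1 + x := by have := abs_lt.1 hx; linarith [this.1]
  have hx2 : |x^2| < 1 := by
    rw [abs_pow]
    exact pow_lt_one₀ (abs_nonneg x) hx (by norm_num)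
  have h1 := (Real.hasSum_log_sub_log_of_abs_lt_one hx).mul_left (x/2)
  have h2 := (Real.hasSum_pow_div_log_of_abs_lt_one hx2).mul_left (1/2)
  have h3 := h1.sub h2
  have hterm : ∀ n : ℕ, x/2 * (2*(1/(2*(n:ℝ)+1))*x^(2*n+1)) - 1/2*((x^2)^(n+1)/((n:ℝ)+1))
      = x^(2*n+2)/((2*(n:ℝ)+1)*(2*(n:ℝ)+2)) := by
    intro n
    have c1 : (2*(n:ℝ)+1) ≠ 0 := by positivity
    have c2 : ((n:ℝ)+1) ≠ 0 := by positivity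
    rw [← pow_mul, show 2*(n+1) = 2*n+2 by ring]
    field_simp
    ring
  have hval : x/2 * (Real.log (1+x) - Real.log (1-x)) - 1/2 * (-Real.log (1 - x^2)) = EE x := by
    rw [show (1:ℝ) - x^2 = (1-x)*(1+x) by ring, Real.log_mul hx1.ne' hx1'.ne', EE_def']
    ring
  rw [show (fun m : ℕ => x^(2*m+2)/((2*(m:ℝ)+1)*(2*(m:ℝ)+2)))
      = fun n : ℕ => x/2 * (2*(1/(2*(n:ℝ)+1))*x^(2*n+1)) - 1/2*((x^2)^(n+1)/((n:ℝ)+1))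
      from funext fun n => (hterm n).symm, ← hval]
  exact h3

lemma mul_log_le (t : ℝ) (h0 : 0 ≤ t) (h2 : t ≤ 2) : t * Real.log t ≤ t * Real.log 2 := by
  rcases eq_or_lt_of_le h0 with h | h
  · simp [← h]
  · exact mul_le_mul_of_nonneg_left (Real.log_le_log h h2) h0

lemma EE_le_log_two {x : ℝ} (h1 : -1 ≤ x) (h2 : x ≤ 1) : EE x ≤ Real.log 2 := by
  rw [EE_def']
  have a1 := mul_log_le (1-x) (by linarith) (by linarith)
  have a2 := mul_log_le (1+x) (by linarith) (by linarith)
  nlinarith [a1, a2]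

lemma EE_tendsto : Tendsto EE (𝓝[<] (1:ℝ)) (𝓝 (Real.log 2)) := by
  have hc : Continuous EE := by unfold EE; fun_prop
  have h1 : EE 1 = Real.log 2 := by
    simp [EE, Real.negMulLog]
    nlinarith [Real.log_pos (by norm_num : (1:ℝ) < 2)]
  have := (hc.tendsto 1).mono_left (nhdsWithin_le_nhds (s := Set.Iio (1:ℝ)))
  rwa [h1] at this

lemma d_nonneg (m : ℕ) : (0:ℝ) ≤ 1/((2*(m:ℝ)+1)*(2*(m:ℝ)+2)) := by positivity

lemma partial_d_le (N : ℕ) :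
    ∑ m ∈ Finset.range N, 1/((2*(m:ℝ)+1)*(2*(m:ℝ)+2)) ≤ Real.log 2 := by
  have hss : ∀ x ∈ Set.Ioo (0:ℝ) 1,
      ∑ m ∈ Finset.range N, x^(2*m+2)/((2*(m:ℝ)+1)*(2*(m:ℝ)+2)) ≤ Real.log 2 := by
    intro x hx
    have hx' : |x| < 1 := by rw [abs_of_pos hx.1]; exact hx.2
    refine le_trans (sum_le_hasSum _ (fun m _ =>
      div_nonneg (pow_nonneg hx.1.le _) (by positivity)) (entropy_hasSum hx')) ?_
    exact EE_le_log_two (by linarith [hx.1]) hx.2.le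
  have hcont : Tendsto (fun x : ℝ => ∑ m ∈ Finset.range N, x^(2*m+2)/((2*(m:ℝ)+1)*(2*(m:ℝ)+2)))
      (𝓝[<] (1:ℝ)) (𝓝 (∑ m ∈ Finset.range N, 1/((2*(m:ℝ)+1)*(2*(m:ℝ)+2)))) := by
    have hcN : Continuous (fun x : ℝ =>
        ∑ m ∈ Finset.range N, x^(2*m+2)/((2*(m:ℝ)+1)*(2*(m:ℝ)+2))) := by
      apply continuous_finset_sum
      intro i _
      exact (continuous_pow _).div_const _
    have ht := (hcN.tendsto 1).mono_left (nhdsWithin_le_nhds (s := Set.Iio (1:ℝ)))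
    simpa using ht
  refine le_of_tendsto hcont ?_
  filter_upwards [Ioo_mem_nhdsLT_of_mem (by norm_num : (1:ℝ) ∈ Set.Ioc (0:ℝ) 1)] with x hx
  exact hss x hx

lemma d_hasSum : HasSum (fun m : ℕ => 1/((2*(m:ℝ)+1)*(2*(m:ℝ)+2))) (Real.log 2) := by
  have hsum : Summable (fun m : ℕ => 1/((2*(m:ℝ)+1)*(2*(m:ℝ)+2))) :=
    summable_of_sum_range_le d_nonneg partial_d_le
  have hle : (∑' (m:ℕ), 1/((2*(m:ℝ)+1)*(2*(m:ℝ)+2))) ≤ Real.log 2 :=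
    Real.tsum_le_of_sum_range_le d_nonneg partial_d_le
  have hge : Real.log 2 ≤ ∑' (m:ℕ), 1/((2*(m:ℝ)+1)*(2*(m:ℝ)+2)) := by
    refine le_of_tendsto EE_tendsto ?_
    filter_upwards [Ioo_mem_nhdsLT_of_mem (by norm_num : (1:ℝ) ∈ Set.Ioc (0:ℝ) 1)] with x hx
    have hx' : |x| < 1 := by rw [abs_of_pos hx.1]; exact hx.2
    rw [← (entropy_hasSum hx').tsum_eq]
    refine Summable.tsum_le_tsum (fun m => ?_) (entropy_hasSum hx').summable hsum
    have hxp : x^(2*m+2) ≤ 1 := pow_le_one₀ hx.1.le hx.2.le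
    have hD : (0:ℝ) < (2*(m:ℝ)+1)*(2*(m:ℝ)+2) := by positivity
    gcongr
  have := hsum.hasSum
  rwa [le_antisymm hle hge] at this

lemma tele_hasSum : HasSum (fun m : ℕ => 1/((2*(m:ℝ)+1)*(2*(m:ℝ)+3))) (1/2 : ℝ) := by
  set f : ℕ → ℝ := fun m => 1/(2*(2*(m:ℝ)+1)) with hf
  have hterm : ∀ m : ℕ, 1/((2*(m:ℝ)+1)*(2*(m:ℝ)+3)) = f m - f (m+1) := by
    intro m
    have c1 : (2*(m:ℝ)+1) ≠ 0 := by positivity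
    have c3 : (2*(m:ℝ)+3) ≠ 0 := by positivity
    simp only [hf]
    push_cast
    field_simp
    ring
  have hnn : ∀ m : ℕ, (0:ℝ) ≤ 1/((2*(m:ℝ)+1)*(2*(m:ℝ)+3)) := fun m => by positivity
  have hpart : ∀ N : ℕ, ∑ m ∈ Finset.range N, 1/((2*(m:ℝ)+1)*(2*(m:ℝ)+3)) = 1/2 - f N := by
    intro N
    calc ∑ m ∈ Finset.range N, 1/((2*(m:ℝ)+1)*(2*(m:ℝ)+3))
        = ∑ m ∈ Finset.range N, (f m - f (m+1)) := by
          exact Finset.sum_congr rfl fun m _ => hterm m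
      _ = f 0 - f N := Finset.sum_range_sub' f N
      _ = 1/2 - f N := by norm_num [hf]
  have hsum : Summable (fun m : ℕ => 1/((2*(m:ℝ)+1)*(2*(m:ℝ)+3))) := by
    refine summable_of_sum_range_le (c := 1/2) hnn (fun N => ?_)
    rw [hpart N]
    have : 0 ≤ f N := by positivity
    linarith
  rw [hsum.hasSum_iff_tendsto_nat]
  simp only [hpart]
  have hf0 : Tendsto f atTop (𝓝 0) := by
    apply squeeze_zero (fun n => by positivity) (g := fun n : ℕ => 1/((n:ℝ)+1))
    · intro n
      simp only [hf]
      apply div_le_div_of_nonneg_left (by norm_num) (by positivity)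
      push_cast; linarith
    · exact tendsto_one_div_add_atTop_nhds_zero_nat
  simpa using tendsto_const_nhds.sub hf0

/-- coefficients of the key series -/
noncomputable def cc (m : ℕ) : ℝ :=
  1/((2*(m:ℝ)+1)*(2*(m:ℝ)+2)) - 2*Real.log 2/((2*(m:ℝ)+1)*(2*(m:ℝ)+3))

lemma cc_hasSum : HasSum cc 0 := by
  have := d_hasSum.sub (tele_hasSum.mul_left (2*Real.log 2))
  simp only [mul_one_div] at this
  have h0 : (0:ℝ) = Real.log 2 - 2*Real.log 2/2 := by ring
  rw [h0]
  exact this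

lemma cc_nonpos {m : ℕ} (hm : 1 ≤ m) : cc m ≤ 0 := by
  unfold cc
  rw [sub_nonpos, div_le_div_iff₀ (by positivity) (by positivity)]
  have h2 : (0.6931471803:ℝ) < Real.log 2 := Real.log_two_gt_d9
  have hm' : (1:ℝ) ≤ (m:ℝ) := by exact_mod_cast hm
  have hA : (0:ℝ) ≤ 2*(m:ℝ)+1 := by positivity
  have hB : 2*(m:ℝ)+3 ≤ 2*Real.log 2*(2*(m:ℝ)+2) := by nlinarith [h2, hm']
  nlinarith [mul_le_mul_of_nonneg_left hB hA]

lemma cc_zero_nonneg : 0 ≤ cc 0 := by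
  have h2 : Real.log 2 < 0.6931471808 := Real.log_two_lt_d9
  simp only [cc]
  norm_num
  nlinarith [h2]


/-- The key series: `S x = Σ cc m * x^(2m+3)`. -/
lemma S_hasSum {x : ℝ} (hx : |x| < 1) :
    HasSum (fun m : ℕ => cc m * x^(2*m+3))
      (x * EE x + Real.log 2 * ((1-x^2)*(Real.log (1+x) - Real.log (1-x))/2 - x)) := by
  set A := Real.log (1+x) - Real.log (1-x) with hA
  -- part 1 : Σ x^(2m+3)/((2m+1)(2m+2)) = x * EE x
  have h1 : HasSum (fun m : ℕ => x^(2*m+3)/((2*(m:ℝ)+1)*(2*(m:ℝ)+2))) (x * EE x) := by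
    have := (entropy_hasSum hx).mul_left x
    refine this.congr_fun fun m => ?_
    rw [show 2*m+3 = (2*m+2)+1 by ring, pow_succ]
    ring
  -- artanh series
  have h2 : HasSum (fun k : ℕ => x^(2*k+1)/(2*(k:ℝ)+1)) (A/2) := by
    have := (Real.hasSum_log_sub_log_of_abs_lt_one hx).mul_left (1/2)
    refine HasSum.congr_fun (by convert this using 1; rfl; ring) fun k => ?_
    ring
  -- shifted artanh series
  have h3 : HasSum (fun k : ℕ => x^(2*k+3)/(2*(k:ℝ)+3)) (A/2 - x) := by
    have h3' := (hasSum_nat_add_iff (f := fun k : ℕ => x^(2*k+1)/(2*(k:ℝ)+1)) 1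
      (g := A/2 - x)).mpr (by simpa using h2)
    refine h3'.congr_fun fun k => ?_
    push_cast
    norm_num
    ring_nf
  -- x² · artanh series
  have h4 : HasSum (fun k : ℕ => x^(2*k+3)/(2*(k:ℝ)+1)) (x^2 * (A/2)) := by
    refine (h2.mul_left (x^2)).congr_fun fun k => ?_
    rw [show 2*k+3 = 2 + (2*k+1) by ring, pow_add]
    ring
  -- combined: Σ x^(2k+3)/((2k+1)(2k+3)) = (x²·A/2 - (A/2 - x))/2
  have h5 : HasSum (fun k : ℕ => x^(2*k+3)/((2*(k:ℝ)+1)*(2*(k:ℝ)+3)))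
      (1/2 * (x^2*(A/2) - (A/2 - x))) := by
    refine ((h4.sub h3).mul_left (1/2)).congr_fun fun k => ?_
    have c1 : (2*(k:ℝ)+1) ≠ 0 := by positivity
    have c3 : (2*(k:ℝ)+3) ≠ 0 := by positivity
    field_simp
    ring
  have h6 := h1.sub (h5.mul_left (2*Real.log 2))
  refine HasSum.congr_fun (by convert h6 using 1; rfl; ring) fun m => ?_
  simp only [cc]
  ring

lemma S_nonneg {x : ℝ} (hx0 : 0 ≤ x) (hx : x < 1) :
    0 ≤ x * EE x + Real.log 2 * ((1-x^2)*(Real.log (1+x) - Real.log (1-x))/2 - x) := by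
  have hx' : |x| < 1 := by rwa [abs_of_nonneg hx0]
  have hS := S_hasSum hx'
  -- lower-bounding series G
  have hG : HasSum (fun m : ℕ => if m = 0 then cc 0 * x^3 else cc m * x^5)
      (cc 0 * x^3 - cc 0 * x^5) := by
    have hg1 : HasSum (fun m : ℕ => cc m * x^5) 0 := by
      simpa using cc_hasSum.mul_right (x^5)
    have hg2 : HasSum (fun m : ℕ => if m = 0 then cc 0 * (x^3 - x^5) else 0)
        (cc 0 * (x^3 - x^5)) := hasSum_ite_eq 0 _
    refine HasSum.congr_fun (by convert hg1.add hg2 using 1; ring) fun m => ?_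
    by_cases h : m = 0 <;> simp [h] <;> ring
  have hle : cc 0 * x^3 - cc 0 * x^5 ≤
      x * EE x + Real.log 2 * ((1-x^2)*(Real.log (1+x) - Real.log (1-x))/2 - x) := by
    refine hasSum_le (fun m => ?_) hG hS
    by_cases h : m = 0
    · simp [h]
    · simp only [h, if_false]
      have hm1 : 1 ≤ m := Nat.one_le_iff_ne_zero.mpr h
      have hpow : x^(2*m+3) ≤ x^5 := pow_le_pow_of_le_one hx0 hx.le (by omega)
      have := cc_nonpos hm1
      nlinarith [this, hpow]
  have : 0 ≤ cc 0 * x^3 - cc 0 * x^5 := by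
    have h35 : x^5 ≤ x^3 := pow_le_pow_of_le_one hx0 hx.le (by omega)
    nlinarith [cc_zero_nonneg, h35]
  linarith

lemma Hb_formula (p : ℝ) : Hb p = (-(p*Real.log p) - (1-p)*Real.log (1-p))/Real.log 2 := by
  simp only [Hb, Real.logb]; ring

lemma Hb_eq_bin (p : ℝ) : Hb p = Real.binEntropy p / Real.log 2 := by
  simp only [Hb_formula, Real.binEntropy, Real.log_inv]; ring_nf

lemma Hb_pos {p : ℝ} (h0 : 0 < p) (h1 : p < 1) : 0 < Hb p := by
  rw [Hb_eq_bin]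
  exact div_pos (Real.binEntropy_pos h0 h1) (Real.log_pos one_lt_two)

lemma Hb_symm (p : ℝ) : Hb (1-p) = Hb p := by
  simp only [Hb, sub_sub_cancel]; ring

lemma Hb_half : Hb (1/2) = 1 := by
  have h2 := (Real.log_pos one_lt_two).ne'
  rw [Hb_formula, show (1:ℝ)-1/2 = 1/2 by norm_num, one_div, Real.log_inv]
  field_simp
  norm_num

lemma EE_eq_entropy {p : ℝ} (h0 : 0 < p) (h1 : p < 1) :
    EE (1-2*p) = Real.log 2 + p*Real.log p + (1-p)*Real.log (1-p) := by
  rw [EE_def', show (1:ℝ)-(1-2*p) = 2*p by ring, show (1:ℝ)+(1-2*p) = 2*(1-p) by ring,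
    Real.log_mul two_ne_zero h0.ne', Real.log_mul two_ne_zero (by linarith : (1:ℝ)-p ≠ 0)]
  ring

lemma lower_bound {p : ℝ} (h0 : 0 < p) (h1 : p < 1) : 4*p*(1-p) ≤ Hb p := by
  set x := 1-2*p with hxdef
  have hx : |x| < 1 := abs_lt.mpr ⟨by simp only [hxdef]; linarith, by simp only [hxdef]; linarith⟩
  have hx2 : x^2 ≤ 1 := by nlinarith [abs_lt.1 hx]
  have key : EE x ≤ Real.log 2 * x^2 := by
    refine hasSum_le (fun m => ?_) (entropy_hasSum hx) (d_hasSum.mul_right (x^2)) |>.trans_eq ?_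
    · have hp : x^(2*m+2) ≤ x^2 := by
        have h := pow_le_pow_of_le_one (sq_nonneg x) hx2 (Nat.succ_le_succ (Nat.zero_le m))
        rw [pow_one] at h
        calc x^(2*m+2) = (x^2)^(m+1) := by rw [show 2*m+2 = 2*(m+1) from by ring, pow_mul]
          _ ≤ x^2 := h
      rw [one_div, inv_mul_eq_div]
      gcongr
    · ring
  have hlog2 : (0:ℝ) < Real.log 2 := Real.log_pos one_lt_two
  rw [Hb_formula, le_div_iff₀ hlog2]
  have hEE := EE_eq_entropy h0 h1
  rw [hxdef] at key
  nlinarith [key, hEE]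

/-- The key inequality `(1-2p)·h(p) ≤ 2 ln2 · p(1-p) · ln((1-p)/p)` for `p ∈ (0,1/2]`. -/
lemma star {p : ℝ} (h0 : 0 < p) (h2 : p ≤ 1/2) :
    (1-2*p) * (-(p*Real.log p) - (1-p)*Real.log (1-p)) ≤
      2*Real.log 2*p*(1-p)*(Real.log (1-p) - Real.log p) := by
  have h1 : p < 1 := by linarith
  have hs := S_nonneg (x := 1-2*p) (by linarith) (by linarith)
  rw [show (1:ℝ)+(1-2*p) = 2*(1-p) by ring, show (1:ℝ)-(1-2*p) = 2*p by ring,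
    Real.log_mul two_ne_zero (by linarith : (1:ℝ)-p ≠ 0),
    Real.log_mul two_ne_zero h0.ne'] at hs
  have hEE := EE_eq_entropy h0 h1
  rw [hEE] at hs
  nlinarith [hs]

noncomputable def psi (p : ℝ) : ℝ := Real.log (4*p*(1-p)) - Real.log 4 * Real.log (Hb p)

lemma log_four : Real.log 4 = 2 * Real.log 2 := by
  rw [show (4:ℝ) = 2^2 by norm_num, Real.log_pow]
  push_cast; ring

lemma psi_hasDeriv {p : ℝ} (h0 : 0 < p) (h1 : p < 1) :
    HasDerivAt psi ((1-2*p)/(p*(1-p)) - 2*(Real.log (1-p) - Real.log p)/Hb p) p := by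
  have hp1 : (0:ℝ) < 1 - p := by linarith
  have hHb := Hb_pos h0 h1
  have hlog2 := Real.log_pos one_lt_two
  have hq : HasDerivAt (fun y : ℝ => 4*y*(1-y)) (4-8*p) p := by
    have h := ((hasDerivAt_id p).const_mul (4:ℝ)).mul ((hasDerivAt_const p (1:ℝ)).sub (hasDerivAt_id p))
    refine h.congr_deriv ?_
    simp; ring
  have hl1 : HasDerivAt (fun y : ℝ => Real.log (4*y*(1-y))) ((4-8*p)/(4*p*(1-p))) p :=
    hq.log (by positivity)
  have hHbd : HasDerivAt Hb ((Real.log (1-p) - Real.log p)/Real.log 2) p := by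
    have hfun : Hb = fun q => Real.binEntropy q / Real.log 2 := funext Hb_eq_bin
    rw [hfun]
    exact (Real.hasDerivAt_binEntropy h0.ne' h1.ne).div_const _
  have hl2 : HasDerivAt (fun y : ℝ => Real.log (Hb y))
      (((Real.log (1-p) - Real.log p)/Real.log 2)/Hb p) p := hHbd.log hHb.ne'
  have h := hl1.sub (hl2.const_mul (Real.log 4))
  refine h.congr_deriv ?_
  rw [log_four]
  field_simp
  ring

lemma psi_half : psi (1/2) = 0 := by
  rw [psi, Hb_half]
  norm_num

lemma psi_nonneg {p : ℝ} (h0 : 0 < p) (h2 : p ≤ 1/2) : 0 ≤ psi p := by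
  rcases eq_or_lt_of_le h2 with he | hlt
  · rw [he, psi_half]
  · have hanti : AntitoneOn psi (Set.Icc p (1/2)) := by
      refine antitoneOn_of_deriv_nonpos (convex_Icc _ _) ?_ ?_ ?_
      · intro y hy
        exact (psi_hasDeriv (lt_of_lt_of_le h0 hy.1) (by linarith [hy.2])).continuousAt.continuousWithinAt
      · rw [interior_Icc]
        intro y hy
        exact (psi_hasDeriv (h0.trans hy.1) (by linarith [hy.2])).differentiableAt.differentiableWithinAt
      · rw [interior_Icc]
        intro y hy
        have hy0 : 0 < y := h0.trans hy.1
        have hy1 : y < 1 := by linarith [hy.2]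
        have hy2 : y ≤ 1/2 := hy.2.le
        rw [(psi_hasDeriv hy0 hy1).deriv]
        have hyq : (0:ℝ) < y*(1-y) := by nlinarith
        have hHby := Hb_pos hy0 hy1
        have hlog2 := Real.log_pos one_lt_two
        have hst := star hy0 hy2
        have key : (1-2*y)*Hb y ≤ (2*(Real.log (1-y) - Real.log y))*(y*(1-y)) := by
          rw [Hb_formula]
          rw [mul_div_assoc', div_le_iff₀ hlog2]
          nlinarith [hst]
        rw [sub_nonpos, div_le_div_iff₀ hyq hHby]
        exact key
    have := hanti (Set.left_mem_Icc.mpr hlt.le) (Set.right_mem_Icc.mpr hlt.le) hlt.le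
    rw [psi_half] at this
    exact this

lemma upper_half {p : ℝ} (h0 : 0 < p) (h2 : p ≤ 1/2) :
    Hb p ≤ (4*p*(1-p)) ^ ((1:ℝ)/Real.log 4) := by
  have h1 : p < 1 := by linarith
  have hq : (0:ℝ) < 4*p*(1-p) := by nlinarith
  have hHb := Hb_pos h0 h1
  have hlog4 : (0:ℝ) < Real.log 4 := by rw [log_four]; positivity
  have hpsi := psi_nonneg h0 h2
  rw [Real.rpow_def_of_pos hq, ← Real.exp_log hHb]
  apply Real.exp_le_exp.mpr
  rw [psi, sub_nonneg] at hpsi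
  rw [mul_one_div, le_div_iff₀ hlog4]
  linarith [hpsi]

end BinaryEntropyBoundsAux

/-- Bounds on the binary entropy: `4p(1-p) ≤ H_b(p) ≤ (4p(1-p))^(1/ln 4)` for `p ∈ (0,1)`. -/
theorem binary_entropy_bounds (p : ℝ) (hp0 : 0 < p) (hp1 : p < 1) :
    4 * p * (1 - p) ≤ Hb p ∧ Hb p ≤ (4 * p * (1 - p)) ^ ((1 : ℝ) / Real.log 4) := by
  constructor
  · exact lower_bound hp0 hp1
  · rcases le_or_gt p (1/2) with h | h
    · exact upper_half hp0 h
    · have := upper_half (p := 1-p) (by linarith) (by linarith)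
      rwa [Hb_symm, show 4*(1-p)*(1-(1-p)) = 4*p*(1-p) by ring] at this
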